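/- Vanishing of the determinant when the traces differ (finite-dimensional case): let P and Q be orthogonal projections on a finite-dimensional complex inner product space. If tr(P − Q) > 0 then det(1 − P(1 − Q)P) = 0, whereas if tr(P − Q) < 0 then det(1 − (1 − P)Q(1 − P)) = 0. In particular, tr(P − Q) ≠ 0 implies det(1 − (P − Q)²) = 0. -/

import Mathlib

open Module

/-- A linear endomorphism of a finite-dimensional space with nontrivial kernel has
zero determinant. -/
lemma aux_det_zero_of_exists {V : Type*} [NormedAddCommGroup V] [InnerProductSpace ℂ V]
    [FiniteDimensional ℂ V] (f : V →ₗ[ℂ] V) (h : ∃ v : V, v ≠ 0 ∧ f v = 0) :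
    LinearMap.det f = 0 :=
  ((LinearMap.hasEigenvalue_zero_tfae (f : Module.End ℂ V)).out 5 3).mp h

/-- If the ranks sum to more than the dimension, two submodules intersect nontrivially. -/
lemma aux_exists_mem_inf {V : Type*} [NormedAddCommGroup V] [InnerProductSpace ℂ V]
    [FiniteDimensional ℂ V] (p q : Submodule ℂ V)
    (h : finrank ℂ V < finrank ℂ p + finrank ℂ q) :
    ∃ v : V, v ∈ p ∧ v ∈ q ∧ v ≠ 0 := by
  have h1 := Submodule.finrank_sup_add_finrank_inf_eq p q
  have h2 : finrank ℂ ↥(p ⊔ q) ≤ finrank ℂ V := Submodule.finrank_le _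
  have h3 : 0 < finrank ℂ ↥(p ⊓ q) := by omega
  have h4 : (p ⊓ q : Submodule ℂ V) ≠ ⊥ := by
    intro hbot
    rw [hbot, finrank_bot] at h3
    exact lt_irrefl 0 h3
  obtain ⟨v, hv, hv0⟩ := Submodule.exists_mem_ne_zero_of_ne_bot h4
  exact ⟨v, hv.1, hv.2, hv0⟩

/-- **Vanishing of the determinant when the traces differ (finite-dimensional case).**
Let `P`, `Q` be orthogonal projections on a finite-dimensional complex inner product space.
If `tr(P - Q) > 0` then `det(1 - P(1 - Q)P) = 0`; if `tr(P - Q) < 0` then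
`det(1 - (1 - P)Q(1 - P)) = 0`. In particular `tr(P - Q) ≠ 0` implies
`det(1 - (P - Q)²) = 0`. -/
theorem det_vanishes_of_trace_ne_zero
    {V : Type*} [NormedAddCommGroup V] [InnerProductSpace ℂ V] [FiniteDimensional ℂ V]
    (P Q : V →ₗ[ℂ] V)
    (hP : P ∘ₗ P = P) (hPsa : LinearMap.adjoint P = P)
    (hQ : Q ∘ₗ Q = Q) (hQsa : LinearMap.adjoint Q = Q) :
    (0 < (LinearMap.trace ℂ V (P - Q)).re →
      LinearMap.det (1 - P ∘ₗ (1 - Q) ∘ₗ P) = 0) ∧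
    ((LinearMap.trace ℂ V (P - Q)).re < 0 →
      LinearMap.det (1 - (1 - P) ∘ₗ Q ∘ₗ (1 - P)) = 0) ∧
    (LinearMap.trace ℂ V (P - Q) ≠ 0 →
      LinearMap.det (1 - (P - Q) ∘ₗ (P - Q)) = 0) := by
  obtain ⟨p, hp⟩ := (LinearMap.isProj_iff_isIdempotentElem P).mpr hP
  obtain ⟨q, hq⟩ := (LinearMap.isProj_iff_isIdempotentElem Q).mpr hQ
  set n := finrank ℂ V
  set a := finrank ℂ p
  set b := finrank ℂ q
  -- traces
  have htrP : LinearMap.trace ℂ V P = (a : ℂ) := hp.trace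
  have htrQ : LinearMap.trace ℂ V Q = (b : ℂ) := hq.trace
  have htr : LinearMap.trace ℂ V (P - Q) = (a : ℂ) - b := by
    rw [map_sub, htrP, htrQ]
  -- rank–nullity for P and Q via the complement structure of projections
  have hnP : a + finrank ℂ (LinearMap.ker P) = n :=
    (Submodule.finrank_add_eq_of_isCompl hp.isCompl)
  have hnQ : b + finrank ℂ (LinearMap.ker Q) = n :=
    (Submodule.finrank_add_eq_of_isCompl hq.isCompl)
  -- case b < a : a vector in (range P) ∩ (ker Q)
  have case1 : b < a → ∃ v : V, v ≠ 0 ∧ P v = v ∧ Q v = 0 := by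
    intro hba
    obtain ⟨v, hvp, hvq, hv0⟩ := aux_exists_mem_inf p (LinearMap.ker Q) (by omega)
    exact ⟨v, hv0, hp.map_id v hvp, hvq⟩
  -- case a < b : a vector in (range Q) ∩ (ker P)
  have case2 : a < b → ∃ w : V, w ≠ 0 ∧ Q w = w ∧ P w = 0 := by
    intro hab
    obtain ⟨w, hwq, hwp, hw0⟩ := aux_exists_mem_inf q (LinearMap.ker P) (by omega)
    exact ⟨w, hw0, hq.map_id w hwq, hwp⟩
  refine ⟨?_, ?_, ?_⟩
  · intro hpos
    rw [htr] at hpos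
    have hba : b < a := by
      simp only [Complex.sub_re, Complex.natCast_re] at hpos
      exact_mod_cast (by linarith : (b : ℝ) < a)
    obtain ⟨v, hv0, hPv, hQv⟩ := case1 hba
    refine aux_det_zero_of_exists _ ⟨v, hv0, ?_⟩
    simp [LinearMap.sub_apply, LinearMap.comp_apply, hPv, hQv]
  · intro hneg
    rw [htr] at hneg
    have hab : a < b := by
      simp only [Complex.sub_re, Complex.natCast_re] at hneg
      exact_mod_cast (by linarith : (a : ℝ) < b)
    obtain ⟨w, hw0, hQw, hPw⟩ := case2 hab
    refine aux_det_zero_of_exists _ ⟨w, hw0, ?_⟩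
    simp [LinearMap.sub_apply, LinearMap.comp_apply, hPw, hQw]
  · intro hne
    rw [htr] at hne
    have hab : a ≠ b := by
      intro h; apply hne; rw [h]; ring
    rcases lt_or_gt_of_ne hab with h | h
    · obtain ⟨w, hw0, hQw, hPw⟩ := case2 h
      refine aux_det_zero_of_exists _ ⟨w, hw0, ?_⟩
      simp [LinearMap.sub_apply, LinearMap.comp_apply, hPw, hQw]
    · obtain ⟨v, hv0, hPv, hQv⟩ := case1 h
      refine aux_det_zero_of_exists _ ⟨v, hv0, ?_⟩
      simp [LinearMap.sub_apply, LinearMap.comp_apply, hPv, hQv]
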